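/- Let ρ > 0 and ε̄ ∈ (0,1) with e^{1/6}ρ/ε̄ > 1. Define β(α) = M + ρα(1 + (1/e)(e^{1/6}ρ/ε̄)^{1/(2α)}) for α > 0. Then β is differentiable on (0,∞), its derivative vanishes exactly at α* = ln(e^{1/6}ρ/ε̄) / (2(1 + W(1))), where W(1) is the unique positive solution of w e^w = 1, and β is strictly decreasing on (0,α*) and strictly increasing on (α*,∞). -/

import Mathlib

open Real Set

theorem beta_monotonicity
    (M : ℕ) (ρ ε' : ℝ) (hρ : 0 < ρ) (hε : ε' ∈ Set.Ioo (0:ℝ) 1)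
    (hbig : Real.exp (1/6) * ρ / ε' > 1)
    (W : ℝ) (hW : 0 < W) (hWeq : W * Real.exp W = 1)
    (β : ℝ → ℝ)
    (hβ : ∀ α : ℝ, β α = M + ρ * α * (1 + (1 / Real.exp 1)
            * (Real.exp (1/6) * ρ / ε') ^ (1 / (2 * α))))
    (αstar : ℝ) (hαstar : αstar = Real.log (Real.exp (1/6) * ρ / ε') / (2 * (1 + W))) :
    (∀ α : ℝ, 0 < α → DifferentiableAt ℝ β α) ∧
    (∀ α : ℝ, 0 < α → (deriv β α = 0 ↔ α = αstar)) ∧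
    StrictAntiOn β (Set.Ioo 0 αstar) ∧
    StrictMonoOn β (Set.Ioi αstar) := by
  have hc : (1:ℝ) < Real.exp (1/6) * ρ / ε' := hbig
  have hc0 : (0:ℝ) < Real.exp (1/6) * ρ / ε' := lt_trans one_pos hc
  set L := Real.log (Real.exp (1/6) * ρ / ε') with hL_def
  have hL : 0 < L := Real.log_pos hc
  have h1W : 0 < 1 + W := by linarith
  have hαs0 : 0 < αstar := by rw [hαstar]; positivity
  -- rewrite β
  have hβ' : β = fun α : ℝ => (M:ℝ) + ρ * α
      + (ρ / Real.exp 1) * (α * Real.exp (L / (2 * α))) := by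
    funext α
    rw [hβ, Real.rpow_def_of_pos hc0, mul_one_div, ← hL_def]
    have := Real.exp_ne_zero 1
    field_simp
    ring
  -- derivative
  have hderiv : ∀ α : ℝ, 0 < α → HasDerivAt β
      (ρ * (1 - (L / (2 * α) - 1) * Real.exp (L / (2 * α) - 1))) α := by
    intro α hα
    have hα2 : (2 * α) ≠ 0 := by positivity
    have h2 : HasDerivAt (fun x : ℝ => 2 * x) 2 α := by
      simpa using (hasDerivAt_id α).const_mul (2:ℝ)
    have h1 : HasDerivAt (fun x : ℝ => L / (2 * x))
        ((0 * (2 * α) - L * 2) / (2 * α) ^ 2) α := (hasDerivAt_const α L).div h2 hα2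
    have hexp := h1.exp
    have hprod := (hasDerivAt_id α).mul hexp
    have hfull := (((hasDerivAt_const α (M:ℝ)).add
        ((hasDerivAt_id α).const_mul ρ)).add (hprod.const_mul (ρ / Real.exp 1)))
    rw [hβ']
    convert hfull using 1
    · rfl
    · rfl
    · rfl
    rw [Real.exp_sub]
    have hα0 : α ≠ 0 := ne_of_gt hα
    have he := Real.exp_ne_zero 1
    field_simp
    simp only [id]
    ring
  -- sign lemmas
  have key1 : ∀ t : ℝ, t < W → t * Real.exp t < 1 := by
    intro t ht
    rcases le_or_gt t 0 with h | h
    · have : t * Real.exp t ≤ 0 := mul_nonpos_of_nonpos_of_nonneg h (Real.exp_pos t).le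
      linarith
    · rw [← hWeq]
      exact mul_lt_mul ht (Real.exp_le_exp.mpr ht.le) (Real.exp_pos t) hW.le
  have key2 : ∀ t : ℝ, W < t → 1 < t * Real.exp t := by
    intro t ht
    rw [← hWeq]
    exact mul_lt_mul ht (Real.exp_le_exp.mpr ht.le) (Real.exp_pos W) (le_of_lt (hW.trans ht))
  -- relation between α and αstar
  have hlt : ∀ α : ℝ, 0 < α → α < αstar → W < L / (2 * α) - 1 := by
    intro α hα h
    rw [hαstar, lt_div_iff₀ (by positivity)] at h
    rw [lt_sub_iff_add_lt, lt_div_iff₀ (by positivity)]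
    nlinarith
  have hgt : ∀ α : ℝ, 0 < α → αstar < α → L / (2 * α) - 1 < W := by
    intro α hα h
    rw [hαstar, div_lt_iff₀ (by positivity)] at h
    rw [sub_lt_iff_lt_add, div_lt_iff₀ (by positivity)]
    nlinarith
  -- sign of derivative
  have Dneg : ∀ α : ℝ, 0 < α → α < αstar →
      ρ * (1 - (L / (2 * α) - 1) * Real.exp (L / (2 * α) - 1)) < 0 := by
    intro α hα h
    have := key2 _ (hlt α hα h)
    have : 1 - (L / (2 * α) - 1) * Real.exp (L / (2 * α) - 1) < 0 := by linarith
    exact mul_neg_of_pos_of_neg hρ this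
  have Dpos : ∀ α : ℝ, 0 < α → αstar < α →
      0 < ρ * (1 - (L / (2 * α) - 1) * Real.exp (L / (2 * α) - 1)) := by
    intro α hα h
    have := key1 _ (hgt α hα h)
    have : 0 < 1 - (L / (2 * α) - 1) * Real.exp (L / (2 * α) - 1) := by linarith
    exact mul_pos hρ this
  refine ⟨fun α hα => (hderiv α hα).differentiableAt, ?_, ?_, ?_⟩
  · intro α hα
    rw [(hderiv α hα).deriv]
    constructor
    · intro h0
      rcases lt_trichotomy α αstar with h | h | h
      · exact absurd h0 (ne_of_lt (Dneg α hα h))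
      · exact h
      · exact absurd h0 (ne_of_gt (Dpos α hα h))
    · intro h
      subst h
      have heqW : L / (2 * α) - 1 = W := by
        rw [hαstar]
        field_simp
        ring
      rw [heqW, hWeq]
      ring
  · apply strictAntiOn_of_deriv_neg (convex_Ioo 0 αstar)
    · intro x hx
      exact (hderiv x hx.1).differentiableAt.continuousAt.continuousWithinAt
    · intro x hx
      rw [interior_Ioo] at hx
      rw [(hderiv x hx.1).deriv]
      exact Dneg x hx.1 hx.2
  · apply strictMonoOn_of_deriv_pos (convex_Ioi αstar)
    · intro x hx
      have hx0 : 0 < x := lt_trans hαs0 hx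
      exact (hderiv x hx0).differentiableAt.continuousAt.continuousWithinAt
    · intro x hx
      rw [interior_Ioi] at hx
      have hx0 : 0 < x := lt_trans hαs0 hx
      rw [(hderiv x hx0).deriv]
      exact Dpos x hx0 hx
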